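/- arXiv:1907.05360 — 2 statements merged into one kernel-verified Lean document; each statement's English description precedes it below -/
import Mathlib

section
/- (Ehrling's inequality) Let X, Y, X̃ be Banach spaces with X reflexive and X ↪ X̃ a continuous injection, and let T : X → Y be a compact linear operator. Then for every ε > 0 there exists C_ε > 0 such that ‖Tx‖_Y ≤ ε‖x‖_X + C_ε‖x‖_{X̃} for all x ∈ X. -/
open Filter Metric NormedSpace Topology

section aux
variable (𝕜 : Type*) {E : Type*} [RCLike 𝕜] [NormedAddCommGroup E] [NormedSpace 𝕜 E]

/-- Uniqueness of limits in the weak topology of a normed space. -/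
lemma weak_eq_of_nhds_neBot {a b : WeakSpace 𝕜 E} (h : (𝓝 a ⊓ 𝓝 b).NeBot) : a = b := by
  have key : ∀ f : StrongDual 𝕜 E, f ((toWeakSpace 𝕜 E).symm a) = f ((toWeakSpace 𝕜 E).symm b) := by
    intro f
    have hf : Continuous fun x : WeakSpace 𝕜 E => f ((toWeakSpace 𝕜 E).symm x) :=
      WeakBilin.eval_continuous ((topDualPairing 𝕜 E).flip) f
    have h1 : Filter.map (fun x : WeakSpace 𝕜 E => f ((toWeakSpace 𝕜 E).symm x)) (𝓝 a ⊓ 𝓝 b) ≤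
        𝓝 (f ((toWeakSpace 𝕜 E).symm a)) ⊓ 𝓝 (f ((toWeakSpace 𝕜 E).symm b)) :=
      le_inf ((hf.tendsto a).mono_left inf_le_left) ((hf.tendsto b).mono_left inf_le_right)
    exact eq_of_nhds_neBot (h.map _ |>.mono h1)
  exact (toWeakSpace 𝕜 E).symm.injective ((NormedSpace.eq_iff_forall_dual_eq 𝕜 (E := E)).2 key)

end aux

section aux2
variable (𝕜 : Type*) {E : Type*} [RCLike 𝕜] [NormedAddCommGroup E] [NormedSpace 𝕜 E]

open NormedSpace

lemma weak_isCompact_closedBall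
    (hrefl : Function.Surjective (inclusionInDoubleDual 𝕜 E)) :
    IsCompact (toWeakSpace 𝕜 E '' Metric.closedBall (0 : E) 1) := by
  set g : WeakSpace 𝕜 E → WeakDual 𝕜 (StrongDual 𝕜 E) :=
    fun x => inclusionInDoubleDual 𝕜 E ((toWeakSpace 𝕜 E).symm x) with hg
  have hg_cont : Continuous g := by
    apply WeakBilin.continuous_of_continuous_eval
    intro f
    exact WeakBilin.eval_continuous ((topDualPairing 𝕜 E).flip) f
  have hg_ind : IsInducing g := by
    refine IsInducing.of_comp hg_cont (WeakBilin.coeFn_continuous _) ?_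
    exact ⟨rfl⟩
  have hg_inj : Function.Injective g := by
    intro a b hab
    apply (toWeakSpace 𝕜 E).symm.injective
    rw [NormedSpace.eq_iff_forall_dual_eq 𝕜]
    intro f
    exact congrFun (congrArg DFunLike.coe hab) f
  have hemb : IsEmbedding g := ⟨hg_ind, hg_inj⟩
  have himg : g '' (toWeakSpace 𝕜 E '' Metric.closedBall (0 : E) 1)
      = WeakDual.toStrongDual ⁻¹' Metric.closedBall 0 1 := by
    ext F
    simp only [Set.mem_image, Set.mem_preimage, Metric.mem_closedBall, dist_zero_right]
    constructor
    · rintro ⟨-, ⟨x, hx, rfl⟩, rfl⟩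
      refine (le_of_eq (dist_zero_right (E := StrongDual 𝕜 (StrongDual 𝕜 E)) _)).trans ?_
      show ‖inclusionInDoubleDual 𝕜 E x‖ ≤ 1
      rw [show inclusionInDoubleDual 𝕜 E x = inclusionInDoubleDualLi 𝕜 x from rfl,
        (inclusionInDoubleDualLi 𝕜).norm_map]
      exact hx
    · intro hF
      replace hF := (dist_zero_right (E := StrongDual 𝕜 (StrongDual 𝕜 E)) _).symm.le.trans hF
      obtain ⟨x, rfl⟩ := hrefl (WeakDual.toStrongDual F)
      refine ⟨toWeakSpace 𝕜 E x, ⟨x, ?_, rfl⟩, rfl⟩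
      rwa [← (inclusionInDoubleDualLi 𝕜 (E := E)).norm_map x]
  have h2 : IsCompact (g '' (toWeakSpace 𝕜 E '' Metric.closedBall (0 : E) 1)) := by
    rw [himg]; exact WeakDual.isCompact_closedBall (𝕜 := 𝕜) (E := StrongDual 𝕜 E) 0 1
  exact hemb.isCompact_iff.mpr h2

end aux2

/-- Ehrling's inequality: `X` reflexive Banach, `ι : X ↪ X̃` a continuous injection,
`T : X → Y` compact.  Then for every `ε > 0` there is `C_ε > 0` with
`‖Tx‖ ≤ ε‖x‖_X + C_ε‖x‖_X̃` for all `x`. -/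
theorem stmt_1 {𝕜 X Y Xt : Type*} [RCLike 𝕜]
    [NormedAddCommGroup X] [NormedSpace 𝕜 X] [CompleteSpace X]
    [NormedAddCommGroup Y] [NormedSpace 𝕜 Y] [CompleteSpace Y]
    [NormedAddCommGroup Xt] [NormedSpace 𝕜 Xt] [CompleteSpace Xt]
    (hrefl : Function.Surjective (NormedSpace.inclusionInDoubleDual 𝕜 X))
    (ι : X →L[𝕜] Xt) (hι : Function.Injective ι)
    (T : X →L[𝕜] Y) (hT : IsCompactOperator T) :
    ∀ ε > (0 : ℝ), ∃ C > (0 : ℝ), ∀ x : X, ‖T x‖ ≤ ε * ‖x‖ + C * ‖ι x‖ := by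
  intro ε hε
  by_contra hcon
  push_neg at hcon
  -- extract a normalized sequence
  have hu : ∀ n : ℕ, ∃ x : X, ‖x‖ = 1 ∧ ε + (n + 1 : ℝ) * ‖ι x‖ < ‖T x‖ := by
    intro n
    obtain ⟨x, hx⟩ := hcon (n + 1 : ℝ) (by positivity)
    have hx0 : x ≠ 0 := by
      rintro rfl
      simp at hx
    have hn : (0 : ℝ) < ‖x‖ := norm_pos_iff.mpr hx0
    have hninv : (0 : ℝ) < ‖x‖⁻¹ := inv_pos.mpr hn
    refine ⟨((‖x‖ : 𝕜))⁻¹ • x, ?_, ?_⟩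
    · rw [norm_smul, norm_inv, RCLike.norm_ofReal, abs_of_pos hn, inv_mul_cancel₀ hn.ne']
    · rw [map_smul, map_smul, norm_smul, norm_smul, norm_inv, RCLike.norm_ofReal,
        abs_of_pos hn]
      have h2 := mul_lt_mul_of_pos_left hx hninv
      have h1 : ‖x‖⁻¹ * ‖x‖ = 1 := inv_mul_cancel₀ hn.ne'
      nlinarith [norm_nonneg (ι x), norm_nonneg (T x)]
  choose u hu1 hu2 using hu
  have huε : ∀ n : ℕ, ε < ‖T (u n)‖ := fun n => by
    have := hu2 n
    nlinarith [norm_nonneg (ι (u n)), Nat.cast_nonneg (α := ℝ) n]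
  -- ι (u n) → 0 in norm
  have hιlim : Filter.Tendsto (fun n : ℕ => ι (u n)) Filter.atTop (𝓝 0) := by
    have hbd : ∀ n : ℕ, ‖ι (u n)‖ ≤ ‖T‖ / (n + 1 : ℝ) := by
      intro n
      have h2 := hu2 n
      have h3 : ‖T (u n)‖ ≤ ‖T‖ := by
        calc ‖T (u n)‖ ≤ ‖T‖ * ‖u n‖ := T.le_opNorm _
        _ = ‖T‖ := by rw [hu1 n, mul_one]
      rw [div_eq_inv_mul, ← mul_le_mul_iff_right₀ (show (0:ℝ) < (n+1:ℝ) by positivity)]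
      have h5 : ((n:ℝ)+1) * (((n:ℝ)+1)⁻¹ * ‖T‖) = ‖T‖ := by
        rw [← mul_assoc, mul_inv_cancel₀ (by positivity : ((n:ℝ)+1) ≠ 0), one_mul]
      linarith
    have htend : Filter.Tendsto (fun n : ℕ => ‖T‖ / (n + 1 : ℝ)) Filter.atTop (𝓝 0) := by
      have h4 : Filter.Tendsto (fun n : ℕ => (n : ℝ) + 1) Filter.atTop Filter.atTop :=
        Filter.tendsto_atTop_add_const_right _ 1 tendsto_natCast_atTop_atTop
      exact Filter.Tendsto.div_atTop tendsto_const_nhds h4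
    exact squeeze_zero_norm hbd htend
  -- weak cluster point of u
  set w : ℕ → WeakSpace 𝕜 X := fun n => toWeakSpace 𝕜 X (u n) with hw
  set F : Filter (WeakSpace 𝕜 X) := Filter.map w Filter.atTop with hF
  haveI : F.NeBot := Filter.map_neBot
  have hF_le : F ≤ Filter.principal (toWeakSpace 𝕜 X '' Metric.closedBall (0 : X) 1) :=
    Filter.le_principal_iff.mpr (Filter.mem_map.mpr (Filter.Eventually.of_forall fun n =>
      ⟨u n, by simp [Metric.mem_closedBall, hu1 n], rfl⟩))
  obtain ⟨x₀, -, hcl⟩ := (weak_isCompact_closedBall 𝕜 hrefl).exists_clusterPt hF_le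
  set G : Filter (WeakSpace 𝕜 X) := 𝓝 x₀ ⊓ F with hG
  haveI hGne : G.NeBot := hcl
  set x₀' : X := (toWeakSpace 𝕜 X).symm x₀ with hx₀'
  -- the weak-weak continuous versions of ι and T
  set ιw : WeakSpace 𝕜 X → WeakSpace 𝕜 Xt :=
    fun x => toWeakSpace 𝕜 Xt (ι ((toWeakSpace 𝕜 X).symm x)) with hιw
  have hιw_cont : Continuous ιw := by
    apply WeakBilin.continuous_of_continuous_eval
    intro f
    exact WeakBilin.eval_continuous ((topDualPairing 𝕜 X).flip) (f.comp ι)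
  set Tw : WeakSpace 𝕜 X → WeakSpace 𝕜 Y :=
    fun x => toWeakSpace 𝕜 Y (T ((toWeakSpace 𝕜 X).symm x)) with hTw
  have hTw_cont : Continuous Tw := by
    apply WeakBilin.continuous_of_continuous_eval
    intro f
    exact WeakBilin.eval_continuous ((topDualPairing 𝕜 X).flip) (f.comp T)
  -- Step 1: ι x₀' = 0, hence x₀' = 0.
  have hι0 : ι x₀' = 0 := by
    have h1 : Filter.map ιw G ≤ 𝓝 (ιw x₀) :=
      ((hιw_cont.tendsto x₀).mono_left inf_le_left)
    have h2 : Filter.map ιw G ≤ 𝓝 (toWeakSpace 𝕜 Xt 0) := by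
      calc Filter.map ιw G ≤ Filter.map ιw F := Filter.map_mono inf_le_right
        _ = Filter.map (fun n : ℕ => toWeakSpace 𝕜 Xt (ι (u n))) Filter.atTop := by
              rw [hF, Filter.map_map]; rfl
        _ ≤ 𝓝 (toWeakSpace 𝕜 Xt 0) :=
              ((toWeakSpaceCLM 𝕜 Xt).continuous.tendsto 0).comp hιlim
    have hne : (𝓝 (ιw x₀) ⊓ 𝓝 (toWeakSpace 𝕜 Xt 0)).NeBot :=
      (hGne.map ιw).mono (le_inf h1 h2)
    have := weak_eq_of_nhds_neBot 𝕜 hne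
    simpa [hιw] using (toWeakSpace 𝕜 Xt).injective (by simpa [hιw] using this)
  have hx₀0 : x₀' = 0 := hι (by rw [hι0, map_zero])
  -- Step 2: a norm cluster point y of T (u n), with ε ≤ ‖y‖.
  set v : WeakSpace 𝕜 X → Y := fun x => T ((toWeakSpace 𝕜 X).symm x) with hv
  set H : Filter Y := Filter.map v G with hH
  haveI : H.NeBot := hGne.map v
  have hK : IsCompact (closure (T '' Metric.closedBall (0 : X) 1)) :=
    hT.isCompact_closure_image_closedBall 1
  have hmemTu : Filter.map v F = Filter.map (fun n : ℕ => T (u n)) Filter.atTop := by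
    rw [hF, Filter.map_map]; rfl
  have hH_le : H ≤ Filter.principal (closure (T '' Metric.closedBall (0 : X) 1)) := by
    calc H ≤ Filter.map v F := Filter.map_mono inf_le_right
      _ = Filter.map (fun n : ℕ => T (u n)) Filter.atTop := hmemTu
      _ ≤ Filter.principal (closure (T '' Metric.closedBall (0 : X) 1)) :=
          Filter.le_principal_iff.mpr (Filter.mem_map.mpr (Filter.Eventually.of_forall fun n =>
            subset_closure ⟨u n, by simp [Metric.mem_closedBall, hu1 n], rfl⟩))
  obtain ⟨y, -, hycl⟩ := hK.exists_clusterPt hH_le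
  have hyε : ε ≤ ‖y‖ := by
    have hS : {z : Y | ε ≤ ‖z‖} ∈ Filter.map (fun n : ℕ => T (u n)) Filter.atTop :=
      Filter.mem_map.mpr (Filter.Eventually.of_forall fun n => (huε n).le)
    have hS' : {z : Y | ε ≤ ‖z‖} ∈ H := by
      have hle : H ≤ Filter.map (fun n : ℕ => T (u n)) Filter.atTop :=
        le_trans (Filter.map_mono inf_le_right) (le_of_eq hmemTu)
      exact hle hS
    have hclosed : IsClosed {z : Y | ε ≤ ‖z‖} := isClosed_le continuous_const continuous_norm
    have hmem : y ∈ closure {z : Y | ε ≤ ‖z‖} :=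
      mem_closure_iff_clusterPt.mpr (hycl.mono (Filter.le_principal_iff.mpr hS'))
    rwa [hclosed.closure_eq] at hmem
  -- Step 3: y is also a weak cluster point, so y = T x₀' = 0, contradiction.
  haveI hyH : (𝓝 y ⊓ H).NeBot := hycl
  set N : Filter (WeakSpace 𝕜 Y) := Filter.map (toWeakSpaceCLM 𝕜 Y) (𝓝 y ⊓ H) with hN
  have hN1 : N ≤ 𝓝 (toWeakSpaceCLM 𝕜 Y y) :=
    (((toWeakSpaceCLM 𝕜 Y).continuous.tendsto y).mono_left inf_le_left)
  have hN2 : N ≤ 𝓝 (Tw x₀) := by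
    calc N ≤ Filter.map (toWeakSpaceCLM 𝕜 Y) H := Filter.map_mono inf_le_right
      _ = Filter.map Tw G := by rw [hH, Filter.map_map]; rfl
      _ ≤ 𝓝 (Tw x₀) := (hTw_cont.tendsto x₀).mono_left inf_le_left
  have hne2 : (𝓝 (toWeakSpaceCLM 𝕜 Y y) ⊓ 𝓝 (Tw x₀)).NeBot :=
    (hyH.map (toWeakSpaceCLM 𝕜 Y)).mono (le_inf hN1 hN2)
  have heq := weak_eq_of_nhds_neBot 𝕜 hne2
  have hy0 : y = T x₀' := by
    apply (toWeakSpace 𝕜 Y).injective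
    rw [← toWeakSpaceCLM_eq_toWeakSpace, heq, hTw]
  rw [hx₀0, map_zero] at hy0
  rw [hy0, norm_zero] at hyε
  linarith
end

section
/- (Norm equivalence of complexification norms) Let X be a real normed vector space and let ‖·‖_B be any complexification norm on X ⊗_ℝ ℂ, i.e. ‖x + i·0‖_B = ‖x‖_X and ‖x + iy‖_B = ‖x − iy‖_B for all x, y ∈ X. Then for the Taylor norm ‖x + iy‖_T := sup_{θ∈[0,2π]} ‖x cos θ − y sin θ‖_X one has ‖z‖_T ≤ ‖z‖_B ≤ 2‖z‖_T for all z ∈ X ⊗_ℝ ℂ. -/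
/-- The complex scalar multiplication on the complexification `X × X` of a real vector space:
`c • (x, y) = (Re c • x - Im c • y, Im c • x + Re c • y)`. -/
def cSMul {X : Type*} [AddCommGroup X] [Module ℝ X] (c : ℂ) (z : X × X) : X × X :=
  (c.re • z.1 - c.im • z.2, c.im • z.1 + c.re • z.2)

/-- The minimal (Taylor) complexification norm
`‖x + iy‖_T = sup_θ ‖x cos θ - y sin θ‖`. -/
noncomputable def taylorNorm {X : Type*} [NormedAddCommGroup X] [NormedSpace ℝ X]
    (z : X × X) : ℝ :=
  ⨆ θ : ℝ, ‖Real.cos θ • z.1 - Real.sin θ • z.2‖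

/-- Equivalence of complexification norms: any complexification norm `N` on `X ⊗_ℝ ℂ ≃ X × X`
(a norm which is conjugation-invariant, complex-homogeneous and restricts to `‖·‖_X` on `X`)
satisfies `‖z‖_T ≤ N z ≤ 2‖z‖_T`, where `‖·‖_T` is the Taylor norm. -/
theorem stmt_10 {X : Type*} [NormedAddCommGroup X] [NormedSpace ℝ X]
    (N : X × X → ℝ)
    (Ntri : ∀ z w : X × X, N (z + w) ≤ N z + N w)
    (Nsmul : ∀ (c : ℂ) (z : X × X), N (cSMul c z) = ‖c‖ * N z)
    (Nreal : ∀ x : X, N (x, 0) = ‖x‖)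
    (Nconj : ∀ x y : X, N (x, y) = N (x, -y)) :
    ∀ z : X × X, taylorNorm z ≤ N z ∧ N z ≤ 2 * taylorNorm z := by
  -- N(0,y) = ‖y‖
  have Nim : ∀ y : X, N (0, y) = ‖y‖ := by
    intro y
    have h := Nsmul Complex.I (y, 0)
    simp [cSMul] at h
    rw [h, Nreal]
  -- N(a,0) ≤ N(a,b)
  have Nmono : ∀ a b : X, ‖a‖ ≤ N (a, b) := by
    intro a b
    have key : ((a, 0) : X × X) = cSMul ((1:ℂ)/2) ((a, b) + (a, -b)) := by
      simp [cSMul, Prod.ext_iff, smul_add]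
      module
    have h1 : N (a, 0) = (1/2 : ℝ) * N ((a, b) + (a, -b)) := by
      rw [key, Nsmul]
      norm_num
    have h2 : N ((a, b) + (a, -b)) ≤ N (a, b) + N (a, -b) := Ntri _ _
    rw [← Nconj] at h2
    rw [← Nreal a, h1]
    linarith
  -- rotation invariance
  have Nrot : ∀ (θ : ℝ) (x y : X),
      N (Real.cos θ • x - Real.sin θ • y, Real.sin θ • x + Real.cos θ • y) = N (x, y) := by
    intro θ x y
    have h := Nsmul ⟨Real.cos θ, Real.sin θ⟩ (x, y)
    have habs : ‖(⟨Real.cos θ, Real.sin θ⟩ : ℂ)‖ = 1 := by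
      simp [Complex.norm_def, Complex.normSq_mk]
      have : Real.cos θ * Real.cos θ + Real.sin θ * Real.sin θ = 1 := by
        nlinarith [Real.sin_sq_add_cos_sq θ]
      simp [this]
    rw [habs, one_mul] at h
    simpa [cSMul] using h
  intro z
  obtain ⟨x, y⟩ := z
  have bdd : ∀ θ : ℝ, ‖Real.cos θ • x - Real.sin θ • y‖ ≤ ‖x‖ + ‖y‖ := by
    intro θ
    calc ‖Real.cos θ • x - Real.sin θ • y‖ ≤ ‖Real.cos θ • x‖ + ‖Real.sin θ • y‖ :=
          norm_sub_le _ _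
      _ ≤ 1 * ‖x‖ + 1 * ‖y‖ := by
          gcongr <;> rw [norm_smul, Real.norm_eq_abs]
          · exact mul_le_mul_of_nonneg_right (abs_le_one_iff_mul_self_le_one.2 (by
              nlinarith [Real.sin_sq_add_cos_sq θ])) (norm_nonneg _)
          · exact mul_le_mul_of_nonneg_right (abs_le_one_iff_mul_self_le_one.2 (by
              nlinarith [Real.sin_sq_add_cos_sq θ])) (norm_nonneg _)
      _ = ‖x‖ + ‖y‖ := by ring
  have bddAbove : BddAbove (Set.range fun θ : ℝ => ‖Real.cos θ • x - Real.sin θ • y‖) := by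
    refine ⟨‖x‖ + ‖y‖, ?_⟩
    rintro _ ⟨θ, rfl⟩
    exact bdd θ
  constructor
  · -- taylorNorm ≤ N
    apply ciSup_le
    intro θ
    calc ‖Real.cos θ • x - Real.sin θ • y‖
        ≤ N (Real.cos θ • x - Real.sin θ • y, Real.sin θ • x + Real.cos θ • y) := Nmono _ _
      _ = N (x, y) := Nrot θ x y
  · -- N ≤ 2 * taylorNorm
    have hx : ‖x‖ ≤ taylorNorm (x, y) := by
      have := le_ciSup bddAbove 0
      simpa [taylorNorm] using this
    have hy : ‖y‖ ≤ taylorNorm (x, y) := by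
      have := le_ciSup bddAbove (-(Real.pi/2))
      simpa [taylorNorm, Real.cos_pi_div_two, Real.sin_pi_div_two] using this
    have hsplit : N (x, y) ≤ ‖x‖ + ‖y‖ := by
      have : ((x, y) : X × X) = (x, 0) + (0, y) := by simp
      rw [this]
      calc N ((x, 0) + (0, y)) ≤ N (x, 0) + N (0, y) := Ntri _ _
        _ = ‖x‖ + ‖y‖ := by rw [Nreal, Nim]
    linarith
end
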